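/- Let $R$ be a commutative ring, $S$ an $R$-algebra which is a domain (or such that relevant determinants are nonzerodivisors), $\Lambda$ a symmetric $(r+1)\times(r+1)$ matrix over $R$, and $G = (1, g_1, \ldots, g_r)$ a vector in $S^{r+1}$ with first entry $1$ such that $\Lambda \cdot G^t = 0$ (entries of $\Lambda$ viewed in $S$). Let $\Lambda^1_1$ be $\Lambda$ with its first row and column deleted, and suppose $\det \Lambda^1_1$ is a nonzerodivisor in $S$. Then the kernel of the map $S^{r+1} \to S^{r+1}$ given by $\Lambda$ is exactly the free rank-one $S$-submodule generated by $G^t$; that is, if $\Lambda \cdot (b_0, \ldots, b_r)^t = 0$ then $b_i = b_0 g_i$ for all $i$. -/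
import Mathlib


open Matrix

/-- Let `Λ` be a symmetric `(r+1) × (r+1)` matrix over `R`, `S` an `R`-algebra, and
`G = (1, g_1, …, g_r) ∈ S^{r+1}` with `Λ · Gᵗ = 0` (entries of `Λ` viewed in `S`).
If the determinant of the submatrix `Λ¹₁` (delete first row and column) is a
nonzerodivisor in `S`, then the kernel of `Λ : S^{r+1} → S^{r+1}` is exactly the free
rank-one `S`-submodule generated by `Gᵗ`: any `b` with `Λ · b = 0` satisfies
`b_i = b_0 · g_i` for all `i`. -/
theorem ker_of_symmetric_presentation_is_span_G
    (R S : Type*) [CommRing R] [CommRing S] [Algebra R S] (r : ℕ)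
    (Λ : Matrix (Fin (r + 1)) (Fin (r + 1)) R) (hΛ : Λ.IsSymm)
    (G : Fin (r + 1) → S) (hG0 : G 0 = 1)
    (hG : (Λ.map (algebraMap R S)) *ᵥ G = 0)
    (hdet : ((Λ.submatrix Fin.succ Fin.succ).map (algebraMap R S)).det ∈ nonZeroDivisors S) :
    ∀ b : Fin (r + 1) → S, (Λ.map (algebraMap R S)) *ᵥ b = 0 → ∀ i, b i = b 0 * G i := by
  intro b hb
  set Λ' := Λ.map (algebraMap R S) with hΛ'
  set c : Fin (r + 1) → S := fun i => b i - b 0 * G i with hc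
  have hc0 : c 0 = 0 := by simp [hc, hG0]
  have hcker : Λ' *ᵥ c = 0 := by
    have hceq : c = b - b 0 • G := by
      ext i; simp [hc, Pi.smul_apply, smul_eq_mul]
    rw [hceq, Matrix.mulVec_sub, Matrix.mulVec_smul, hb, hG]
    simp
  set M := (Λ.submatrix Fin.succ Fin.succ).map (algebraMap R S) with hM
  have hMker : M *ᵥ (fun j => c j.succ) = 0 := by
    ext j
    have := congrFun hcker j.succ
    simp only [Matrix.mulVec, dotProduct, Pi.zero_apply] at this ⊢
    rw [← this]
    rw [Fin.sum_univ_succ]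
    simp [hc0, hM, Λ', Matrix.submatrix, Matrix.map]
  have hzero : ∀ j : Fin r, c j.succ = 0 := by
    intro j
    have h1 : M.adjugate *ᵥ (M *ᵥ (fun j => c j.succ)) = 0 := by
      rw [hMker]; simp
    rw [Matrix.mulVec_mulVec, Matrix.adjugate_mul] at h1
    have := congrFun h1 j
    simp [Matrix.smul_mulVec, Matrix.one_mulVec] at this
    exact (mul_left_mem_nonZeroDivisors_eq_zero_iff hdet).mp this
  intro i
  have : c i = 0 := by
    induction i using Fin.cases with
    | zero => exact hc0
    | succ j => exact hzero j
  have := sub_eq_zero.mp this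
  exact this
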